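/- Let p be a prime, n ≥ 0 an integer, and f ∈ ℤ_p[[X]]. Suppose x_0, x_1, ..., x_{p-1} ∈ ℤ_p[[X]] satisfy X^n · f = Σ_{i=0}^{p-1} (1+X)^i · x_i((1+X)^p - 1). Then x_0 belongs to the ideal of ℤ_p[[X]] generated by the elements X^j · p^[(n-1-jp)/(p-1)] for 0 ≤ j ≤ [n/p]. -/

import Mathlib

set_option linter.unusedSectionVars false

open PowerSeries Finset

/-- Substitution of a power series `g` with zero constant term into a power series `f`:
the coefficient of `X^d` in `f(g)` is `∑_{n ≤ d} (coeff n f) · (coeff d g^n)`.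
(When the constant term of `g` vanishes, `coeff d (g^n) = 0` for `n > d`, so this is
the usual substitution `f ↦ f(g)`.) -/
noncomputable def PowerSeries.subst' {R : Type*} [CommRing R] (g f : R⟦X⟧) : R⟦X⟧ :=
  PowerSeries.mk fun d => ∑ n ∈ Finset.range (d + 1), coeff n f * coeff d (g ^ n)

namespace SE




variable {R : Type*} [CommRing R]

theorem coeff_subst' (g f : R⟦X⟧) (d : ℕ) :
    coeff d (subst' g f) = ∑ n ∈ range (d + 1), coeff n f * coeff d (g ^ n) :=
  coeff_mk _ _

theorem subst'_add (g f1 f2 : R⟦X⟧) :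
    subst' g (f1 + f2) = subst' g f1 + subst' g f2 := by
  ext d
  simp [coeff_subst', add_mul, Finset.sum_add_distrib]

theorem subst'_sub (g f1 f2 : R⟦X⟧) :
    subst' g (f1 - f2) = subst' g f1 - subst' g f2 := by
  ext d
  simp [coeff_subst', sub_mul, Finset.sum_sub_distrib]

theorem subst'_C_mul (g : R⟦X⟧) (c : R) (f : R⟦X⟧) :
    subst' g (C c * f) = C c * subst' g f := by
  ext d
  simp [coeff_subst', mul_sum, mul_assoc]

theorem subst'_zero (g : R⟦X⟧) : subst' g 0 = 0 := by
  ext d; simp [coeff_subst']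

theorem C_dvd_iff {c : R} {F : R⟦X⟧} :
    C c ∣ F ↔ ∀ d, c ∣ coeff d F := by
  constructor
  · rintro ⟨h, rfl⟩ d
    exact ⟨coeff d h, by simp⟩
  · intro h
    refine ⟨mk fun d => (h d).choose, ?_⟩
    ext d
    rw [coeff_mul, Finset.sum_eq_single (0, d)]
    · simp [← (h d).choose_spec]
    · rintro ⟨a, b⟩ hab hne
      rw [Finset.HasAntidiagonal.mem_antidiagonal] at hab
      rcases Nat.eq_zero_or_pos a with rfl | ha
      · have : b = d := by omega
        subst this
        exact absurd rfl hne
      · rw [coeff_C, if_neg (by omega), zero_mul]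
    · intro h; exact absurd (Finset.HasAntidiagonal.mem_antidiagonal.mpr (by simp)) h

theorem C_dvd_subst' {c : R} {f : R⟦X⟧} (g : R⟦X⟧) (hf : C c ∣ f) :
    C c ∣ subst' g f := by
  rw [C_dvd_iff] at hf ⊢
  intro d
  rw [coeff_subst']
  exact Finset.dvd_sum fun n _ => Dvd.dvd.mul_right (hf n) _

theorem subst'_congr {c : R} {g1 g2 : R⟦X⟧} (h : C c ∣ g1 - g2) (f : R⟦X⟧) :
    C c ∣ subst' g1 f - subst' g2 f := by
  rw [C_dvd_iff]
  intro d
  rw [map_sub, coeff_subst', coeff_subst', ← Finset.sum_sub_distrib]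
  refine Finset.dvd_sum fun n _ => ?_
  rw [← mul_sub, ← map_sub]
  have : C c ∣ g1 ^ n - g2 ^ n := dvd_trans h (sub_dvd_pow_sub_pow g1 g2 n)
  rw [C_dvd_iff] at this
  exact Dvd.dvd.mul_left (this d) _

theorem coeff_pow_eq_zero {g : R⟦X⟧} (hg : constantCoeff g = 0) {b n : ℕ} (h : b < n) :
    coeff b (g ^ n) = 0 := by
  have : (X : R⟦X⟧) ^ n ∣ g ^ n := pow_dvd_pow_of_dvd (X_dvd_iff.mpr hg) n
  exact X_pow_dvd_iff.mp this b h

theorem subst'_X_mul {g : R⟦X⟧} (hg : constantCoeff g = 0) (f : R⟦X⟧) :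
    subst' g (X * f) = g * subst' g f := by
  ext d
  rw [coeff_subst', Finset.sum_range_succ']
  simp only [coeff_succ_X_mul, coeff_zero_eq_constantCoeff, map_mul, constantCoeff_X,
    zero_mul, mul_zero, add_zero, zero_add]
  rw [coeff_mul]
  have : ∀ pr ∈ antidiagonal d, (coeff pr.1 g) * coeff pr.2 (subst' g f)
      = ∑ n ∈ range (d + 1), coeff n f * (coeff pr.1 g * coeff pr.2 (g ^ n)) := by
    intro pr hpr
    rw [coeff_subst']
    rw [Finset.HasAntidiagonal.mem_antidiagonal] at hpr
    rw [Finset.mul_sum]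
    rw [Finset.sum_subset (Finset.range_subset_range.mpr (by omega : pr.2 + 1 ≤ d + 1))]
    · exact Finset.sum_congr rfl fun n _ => by ring
    · intro n _ hn
      rw [Finset.mem_range, not_lt] at hn
      rw [coeff_pow_eq_zero hg (by omega : pr.2 < n), mul_zero, mul_zero]
  rw [Finset.sum_congr rfl this, Finset.sum_comm]
  have : ∀ n ∈ range (d + 1), ∑ pr ∈ antidiagonal d,
      coeff n f * (coeff pr.1 g * coeff pr.2 (g ^ n))
      = coeff n f * coeff d (g ^ (n + 1)) := by
    intro n _
    rw [← Finset.mul_sum, pow_succ']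
    rw [coeff_mul]
  rw [Finset.sum_congr rfl this, Finset.sum_range_succ,
    coeff_pow_eq_zero hg (Nat.lt_succ_self d), mul_zero, add_zero]

theorem coeff_one_add_X_pow (i a : ℕ) :
    coeff a ((1 + X : R⟦X⟧) ^ i) = (i.choose a : R) := by
  induction i generalizing a with
  | zero =>
    cases a <;> simp [coeff_one]
  | succ i ih =>
    rw [pow_succ, mul_add, mul_one, map_add]
    cases a with
    | zero =>
      rw [coeff_zero_mul_X, ih]
      simp
    | succ a =>
      rw [coeff_succ_mul_X, ih, ih, Nat.choose_succ_succ (i) (a)]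
      push_cast
      ring


theorem neg_one_pow_congr (m n : ℕ) (h : m % 2 = n % 2) : (-1 : ℤ) ^ m = (-1) ^ n := by
  rw [← Nat.div_add_mod m 2, ← Nat.div_add_mod n 2, pow_add, pow_add, pow_mul, pow_mul]
  simp [h]

theorem binom_inv (a b N : ℕ) (hb : b < N) :
    ∑ r ∈ range N, ((-1 : ℤ) ^ (a + r) * (b.choose r : ℤ) * (r.choose a : ℤ))
      = if a = b then 1 else 0 := by
  rcases lt_or_ge b a with hba | hab
  · rw [if_neg (by omega)]
    refine Finset.sum_eq_zero fun r _ => ?_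
    rcases lt_or_ge r a with h1 | h2
    · rw [Nat.choose_eq_zero_of_lt h1]; ring
    · rw [Nat.choose_eq_zero_of_lt (by omega : b < r)]; ring
  · -- a ≤ b
    have hsub : ∀ r ∈ range N, r ∉ Icc a b →
        (-1 : ℤ) ^ (a + r) * (b.choose r : ℤ) * (r.choose a : ℤ) = 0 := by
      intro r _ hr
      rw [Finset.mem_Icc, not_and_or, not_le, not_le] at hr
      rcases hr with h1 | h2
      · rw [Nat.choose_eq_zero_of_lt h1]; ring
      · rw [Nat.choose_eq_zero_of_lt h2]; ring
    rw [← Finset.sum_subset (fun r hr => Finset.mem_range.mpr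
        (by rw [Finset.mem_Icc] at hr; omega)) hsub]
    have : ∀ r ∈ Icc a b, (-1 : ℤ) ^ (a + r) * (b.choose r : ℤ) * (r.choose a : ℤ)
        = (b.choose a : ℤ) * ((-1 : ℤ) ^ (r - a) * ((b - a).choose (r - a) : ℤ)) := by
      intro r hr
      rw [Finset.mem_Icc] at hr
      have h1 : (b.choose r) * (r.choose a) = (b.choose a) * ((b - a).choose (r - a)) :=
        Nat.choose_mul hr.1
      have h2 : (-1 : ℤ) ^ (a + r) = (-1 : ℤ) ^ (r - a) :=
        neg_one_pow_congr _ _ (by omega)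
      have h1' : (b.choose r : ℤ) * (r.choose a) = (b.choose a) * ((b - a).choose (r - a)) := by
        exact_mod_cast congrArg (Nat.cast : ℕ → ℤ) h1
      rw [h2, mul_assoc, h1']
      ring
    rw [Finset.sum_congr rfl this, ← Finset.mul_sum]
    have hre : Icc a b = Finset.map ⟨fun s => a + s, add_right_injective a⟩
        (range (b - a + 1)) := by
      ext r
      simp only [Finset.mem_Icc, Finset.mem_map, Finset.mem_range, Function.Embedding.coeFn_mk]
      constructor
      · intro h; exact ⟨r - a, by omega, by omega⟩
      · rintro ⟨s, hs, rfl⟩; omega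
    rw [hre, Finset.sum_map]
    simp only [Function.Embedding.coeFn_mk, Nat.add_sub_cancel_left]
    rw [Int.alternating_sum_range_choose]
    rcases Nat.eq_or_lt_of_le hab with rfl | hlt
    · simp
    · rw [if_neg (by omega), if_neg (by omega), mul_zero]

theorem binom_inv' (a b N : ℕ) (hb : b < N) :
    ∑ r ∈ range N, ((-1 : ℤ) ^ (r + b) * (b.choose r : ℤ) * (r.choose a : ℤ))
      = if a = b then 1 else 0 := by
  have h : ∀ r, (-1 : ℤ) ^ (r + b) = (-1) ^ (a + b) * (-1) ^ (a + r) := by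
    intro r
    rw [← pow_add]
    exact neg_one_pow_congr _ _ (by omega)
  have h2 : ∀ r ∈ range N, (-1 : ℤ) ^ (r + b) * (b.choose r : ℤ) * (r.choose a : ℤ)
      = (-1) ^ (a + b) * ((-1) ^ (a + r) * (b.choose r : ℤ) * (r.choose a : ℤ)) := by
    intro r _
    rw [h r]; ring
  rw [Finset.sum_congr rfl h2, ← Finset.mul_sum, binom_inv a b N hb]
  rcases eq_or_ne a b with rfl | hne
  · simp [neg_one_pow_congr (a + a) 0 (by omega)]
  · simp [hne]


variable (p : ℕ) [hp : Fact p.Prime]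

noncomputable def qq : PowerSeries ℤ_[p] := (1 + X) ^ p - 1

noncomputable def Phi (x : Fin p → PowerSeries ℤ_[p]) : PowerSeries ℤ_[p] :=
  ∑ i : Fin p, (1 + X) ^ (i : ℕ) * subst' (qq p) (x i)

noncomputable def Rho (x : Fin p → PowerSeries ℤ_[p]) : PowerSeries ℤ_[p] :=
  ∑ i : Fin p, (1 + X) ^ (i : ℕ) * subst' (X ^ p) (x i)

noncomputable def Lmap (g : PowerSeries ℤ_[p]) : Fin p → PowerSeries ℤ_[p] :=
  fun i => mk fun k => ∑ r ∈ range p,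
    ((-1 : ℤ_[p]) ^ ((i : ℕ) + r) * (r.choose (i : ℕ) : ℤ_[p])) * coeff (p * k + r) g

theorem coeff_Lmap (g : PowerSeries ℤ_[p]) (i : Fin p) (k : ℕ) :
    coeff k (Lmap p g i) = ∑ r ∈ range p,
      ((-1 : ℤ_[p]) ^ ((i : ℕ) + r) * (r.choose (i : ℕ) : ℤ_[p])) * coeff (p * k + r) g :=
  coeff_mk _ _

theorem coeff_subst_Xp (f : PowerSeries ℤ_[p]) (d : ℕ) :
    coeff d (subst' (X ^ p) f) = if p ∣ d then coeff (d / p) f else 0 := by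
  rw [coeff_subst']
  simp only [← pow_mul, coeff_X_pow]
  by_cases hd : p ∣ d
  · rw [if_pos hd, Finset.sum_eq_single_of_mem (d / p)]
    · rw [if_pos (Nat.mul_div_cancel' hd).symm, mul_one]
    · exact Finset.mem_range.mpr (by have := Nat.div_le_self d p; omega)
    · intro n _ hn
      rw [if_neg, mul_zero]
      intro h
      exact hn (by rw [h, Nat.mul_div_cancel_left n hp.out.pos])
  · rw [if_neg hd]
    refine Finset.sum_eq_zero fun n _ => ?_
    rw [if_neg (fun h => hd ⟨n, h⟩), mul_zero]

theorem coeff_mul_substXp (i : ℕ) (hi : i < p) (y : PowerSeries ℤ_[p]) (k r : ℕ) (hr : r < p) :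
    coeff (p * k + r) ((1 + X) ^ i * subst' (X ^ p) y)
      = (i.choose r : ℤ_[p]) * coeff k y := by
  rw [coeff_mul, Finset.sum_eq_single_of_mem (r, p * k)
    (Finset.HasAntidiagonal.mem_antidiagonal.mpr (by omega))]
  · rw [coeff_one_add_X_pow, coeff_subst_Xp, if_pos (dvd_mul_right p k),
      Nat.mul_div_cancel_left k hp.out.pos]
  · rintro ⟨a, b⟩ hab hne
    rw [Finset.HasAntidiagonal.mem_antidiagonal] at hab
    simp only at hab
    rw [coeff_subst_Xp]
    by_cases hb : p ∣ b
    · obtain ⟨n, rfl⟩ := hb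
      have hnk : n ≠ k := by
        rintro rfl
        have : a = r := by omega
        subst this
        exact hne rfl
      have hnlt : n < k := by
        by_contra h
        push_neg at h
        have h1 : p * (k + 1) ≤ p * n := Nat.mul_le_mul_left _ (by omega)
        have h2 : p * (k + 1) = p * k + p := by ring
        omega
      have ha : i < a := by
        have h1 : p * (n + 1) ≤ p * k := Nat.mul_le_mul_left _ (by omega)
        have h2 : p * (n + 1) = p * n + p := by ring
        omega
      rw [coeff_one_add_X_pow, Nat.choose_eq_zero_of_lt ha]
      simp
    · rw [if_neg hb, mul_zero]

theorem coeff_Rho (x : Fin p → PowerSeries ℤ_[p]) (k r : ℕ) (hr : r < p) :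
    coeff (p * k + r) (Rho p x)
      = ∑ i : Fin p, (((i : ℕ)).choose r : ℤ_[p]) * coeff k (x i) := by
  rw [Rho, map_sum]
  exact Finset.sum_congr rfl fun i _ => coeff_mul_substXp p (i : ℕ) i.isLt (x i) k r hr

theorem cast_binom_inv' (a b N : ℕ) (hb : b < N) :
    ∑ r ∈ range N, ((-1 : ℤ_[p]) ^ (r + b) * (b.choose r : ℤ_[p]) * (r.choose a : ℤ_[p]))
      = if a = b then 1 else 0 := by
  have h := binom_inv' a b N hb
  have h2 := congrArg (Int.cast : ℤ → ℤ_[p]) h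
  push_cast at h2
  rw [h2]

theorem cast_binom_inv (a b N : ℕ) (hb : b < N) :
    ∑ r ∈ range N, ((-1 : ℤ_[p]) ^ (a + r) * (b.choose r : ℤ_[p]) * (r.choose a : ℤ_[p]))
      = if a = b then 1 else 0 := by
  have h := binom_inv a b N hb
  have h2 := congrArg (Int.cast : ℤ → ℤ_[p]) h
  push_cast at h2
  rw [h2]

theorem rho_L (g : PowerSeries ℤ_[p]) : Rho p (Lmap p g) = g := by
  ext d
  obtain ⟨k, r, hr, rfl⟩ : ∃ k r, r < p ∧ p * k + r = d :=
    ⟨d / p, d % p, Nat.mod_lt _ hp.out.pos, Nat.div_add_mod d p⟩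
  rw [coeff_Rho p _ k r hr]
  have h1 : ∀ i : Fin p, (((i : ℕ)).choose r : ℤ_[p]) * coeff k (Lmap p g i)
      = ∑ s ∈ range p, ((-1 : ℤ_[p]) ^ ((i : ℕ) + s) * (s.choose (i : ℕ) : ℤ_[p])
          * (((i : ℕ)).choose r : ℤ_[p])) * coeff (p * k + s) g := by
    intro i
    rw [coeff_Lmap, Finset.mul_sum]
    exact Finset.sum_congr rfl fun s _ => by ring
  rw [Finset.sum_congr rfl fun i _ => h1 i]
  rw [show (univ : Finset (Fin p)).sum _ = _ from Fin.sum_univ_eq_sum_range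
    (fun i => ∑ s ∈ range p, ((-1 : ℤ_[p]) ^ (i + s) * (s.choose i : ℤ_[p])
      * ((i.choose r : ℤ_[p]))) * coeff (p * k + s) g) p]
  rw [Finset.sum_comm]
  have h2 : ∀ s ∈ range p, ∑ i ∈ range p, ((-1 : ℤ_[p]) ^ (i + s) * (s.choose i : ℤ_[p])
      * ((i.choose r : ℤ_[p]))) * coeff (p * k + s) g
      = (if r = s then 1 else 0) * coeff (p * k + s) g := by
    intro s hs
    rw [← Finset.sum_mul, cast_binom_inv' p r s p (Finset.mem_range.mp hs)]
  rw [Finset.sum_congr rfl h2]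
  simp only [ite_mul, one_mul, zero_mul]
  rw [Finset.sum_ite_eq (range p) r (fun s => coeff (p * k + s) g)]
  simp [Finset.mem_range.mpr hr]

theorem L_rho (x : Fin p → PowerSeries ℤ_[p]) : Lmap p (Rho p x) = x := by
  funext i
  ext k
  rw [coeff_Lmap]
  have h1 : ∀ s ∈ range p, ((-1 : ℤ_[p]) ^ ((i : ℕ) + s) * (s.choose (i : ℕ) : ℤ_[p]))
        * coeff (p * k + s) (Rho p x)
      = ∑ j : Fin p, ((-1 : ℤ_[p]) ^ ((i : ℕ) + s) * (((j : ℕ)).choose s : ℤ_[p])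
        * (s.choose (i : ℕ) : ℤ_[p])) * coeff k (x j) := by
    intro s hs
    rw [coeff_Rho p x k s (Finset.mem_range.mp hs), Finset.mul_sum]
    exact Finset.sum_congr rfl fun j _ => by ring
  rw [Finset.sum_congr rfl h1, Finset.sum_comm]
  have h2 : ∀ j : Fin p, ∑ s ∈ range p, ((-1 : ℤ_[p]) ^ ((i : ℕ) + s)
        * (((j : ℕ)).choose s : ℤ_[p]) * (s.choose (i : ℕ) : ℤ_[p])) * coeff k (x j)
      = (if (i : ℕ) = (j : ℕ) then 1 else 0) * coeff k (x j) := by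
    intro j
    rw [← Finset.sum_mul, cast_binom_inv p (i : ℕ) (j : ℕ) p j.isLt]
  rw [Finset.sum_congr rfl fun j _ => h2 j]
  have h3 : ∀ j : Fin p, ((if (i : ℕ) = (j : ℕ) then (1:ℤ_[p]) else 0)) * coeff k (x j)
      = (if i = j then (1:ℤ_[p]) else 0) * coeff k (x j) := by
    intro j
    congr 1
    simp [Fin.ext_iff]
  rw [Finset.sum_congr rfl fun j _ => h3 j]
  simp

variable (p : ℕ) [hp : Fact p.Prime]

theorem coeff_qq (d : ℕ) :
    coeff d (qq p) = (p.choose d : ℤ_[p]) - if d = 0 then 1 else 0 := by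
  rw [qq, map_sub, coeff_one_add_X_pow, coeff_one]

theorem C_p_dvd_qq_sub : C (p : ℤ_[p]) ∣ qq p - X ^ p := by
  rw [C_dvd_iff]
  intro d
  rw [map_sub, coeff_qq, coeff_X_pow]
  rcases eq_or_ne d 0 with rfl | h0
  · rw [if_pos rfl, if_neg hp.out.ne_zero.symm, Nat.choose_zero_right]
    simp
  rcases eq_or_ne d p with rfl | hdp
  · rw [if_neg h0, if_pos rfl, Nat.choose_self]
    simp
  rcases lt_or_ge d p with hdlt | hdge
  · rw [if_neg h0, if_neg hdp, sub_zero, sub_zero]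
    have h := Nat.Prime.dvd_choose_self hp.out h0 hdlt
    obtain ⟨c, hc⟩ := h
    exact ⟨(c : ℤ_[p]), by rw [hc]; push_cast; ring⟩
  · rw [Nat.choose_eq_zero_of_lt (by omega), if_neg h0, if_neg hdp]
    simp

theorem exists_u : ∃ u : PowerSeries ℤ_[p],
    qq p = X ^ p + C (p : ℤ_[p]) * (X * u) := by
  obtain ⟨E, hE⟩ := C_p_dvd_qq_sub p
  have hE0 : constantCoeff E = 0 := by
    have h0 := congrArg (coeff 0) hE
    rw [map_sub, coeff_qq, coeff_X_pow, coeff_C_mul] at h0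
    rw [if_pos rfl, if_neg hp.out.ne_zero.symm, Nat.choose_zero_right] at h0
    simp only [Nat.cast_one, sub_zero, sub_self] at h0
    have hp0 : (p : ℤ_[p]) ≠ 0 := Nat.cast_ne_zero.mpr hp.out.ne_zero
    have := (mul_eq_zero.mp h0.symm).resolve_left hp0
    rwa [coeff_zero_eq_constantCoeff] at this
  obtain ⟨u, hu⟩ := X_dvd_iff.mpr hE0
  refine ⟨u, ?_⟩
  rw [← hu, ← hE]
  ring

theorem constantCoeff_qq : constantCoeff (qq p) = 0 := by
  have := coeff_qq p 0
  rw [coeff_zero_eq_constantCoeff] at this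
  rw [this, if_pos rfl, Nat.choose_zero_right]
  simp

theorem Phi_sub (x y : Fin p → PowerSeries ℤ_[p]) :
    Phi p (fun i => x i - y i) = Phi p x - Phi p y := by
  simp [Phi, subst'_sub, mul_sub, Finset.sum_sub_distrib]

theorem Phi_add (x y : Fin p → PowerSeries ℤ_[p]) :
    Phi p (fun i => x i + y i) = Phi p x + Phi p y := by
  simp [Phi, subst'_add, mul_add, Finset.sum_add_distrib]

theorem Phi_C_mul (c : ℤ_[p]) (x : Fin p → PowerSeries ℤ_[p]) :
    Phi p (fun i => C c * x i) = C c * Phi p x := by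
  rw [Phi, Phi, Finset.mul_sum]
  exact Finset.sum_congr rfl fun i _ => by rw [subst'_C_mul]; ring

theorem Phi_zero : Phi p (fun _ => 0) = 0 := by
  simp [Phi, subst'_zero]

theorem C_dvd_Phi {c : ℤ_[p]} {x : Fin p → PowerSeries ℤ_[p]}
    (h : ∀ i, C c ∣ x i) : C c ∣ Phi p x :=
  Finset.dvd_sum fun i _ => (C_dvd_subst' _ (h i)).mul_left _

theorem Phi_sub_Rho (x : Fin p → PowerSeries ℤ_[p]) :
    C (p : ℤ_[p]) ∣ Phi p x - Rho p x := by
  rw [Phi, Rho, ← Finset.sum_sub_distrib]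
  refine Finset.dvd_sum fun i _ => ?_
  rw [← mul_sub]
  exact (subst'_congr (C_p_dvd_qq_sub p) (x i)).mul_left _

theorem exists_step (g : PowerSeries ℤ_[p]) :
    ∃ g', g - Phi p (Lmap p g) = C (p : ℤ_[p]) * g' := by
  have h := Phi_sub_Rho p (Lmap p g)
  rw [rho_L] at h
  obtain ⟨g', hg'⟩ := h
  exact ⟨-g', by rw [← neg_sub (Phi p (Lmap p g)) g, hg', mul_neg]⟩

noncomputable def gseq (g : PowerSeries ℤ_[p]) : ℕ → PowerSeries ℤ_[p] :=
  fun m => Nat.rec g (fun _ gm => (exists_step p gm).choose) m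

theorem gseq_zero (g : PowerSeries ℤ_[p]) : gseq p g 0 = g := rfl

theorem gseq_spec (g : PowerSeries ℤ_[p]) (m : ℕ) :
    gseq p g m - Phi p (Lmap p (gseq p g m)) = C (p : ℤ_[p]) * gseq p g (m + 1) :=
  (exists_step p (gseq p g m)).choose_spec

theorem telescope (g : PowerSeries ℤ_[p]) (m : ℕ) :
    g - Phi p (fun i => ∑ k ∈ range m, C ((p : ℤ_[p]) ^ k) * Lmap p (gseq p g k) i)
      = C ((p : ℤ_[p]) ^ m) * gseq p g m := by
  induction m with
  | zero =>
    simp [Phi_zero, gseq_zero]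
  | succ m ih =>
    have hsum : (fun i => ∑ k ∈ range (m + 1), C ((p : ℤ_[p]) ^ k)
          * Lmap p (gseq p g k) i)
        = fun i => (∑ k ∈ range m, C ((p : ℤ_[p]) ^ k) * Lmap p (gseq p g k) i)
          + C ((p : ℤ_[p]) ^ m) * Lmap p (gseq p g m) i := by
      funext i
      rw [Finset.sum_range_succ]
    rw [hsum, Phi_add]
    have h2 : Phi p (fun i => C ((p : ℤ_[p]) ^ m) * Lmap p (gseq p g m) i)
        = C ((p : ℤ_[p]) ^ m) * Phi p (Lmap p (gseq p g m)) := Phi_C_mul p _ _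
    have h3 := gseq_spec p g m
    calc g - (Phi p (fun i => ∑ k ∈ range m, C ((p:ℤ_[p])^k) * Lmap p (gseq p g k) i)
          + Phi p (fun i => C ((p:ℤ_[p])^m) * Lmap p (gseq p g m) i))
        = (g - Phi p (fun i => ∑ k ∈ range m, C ((p:ℤ_[p])^k) * Lmap p (gseq p g k) i))
          - C ((p:ℤ_[p])^m) * Phi p (Lmap p (gseq p g m)) := by rw [h2]; ring
      _ = C ((p:ℤ_[p])^m) * (gseq p g m - Phi p (Lmap p (gseq p g m))) := by
          rw [ih]; ring
      _ = C ((p:ℤ_[p])^(m+1)) * gseq p g (m+1) := by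
          rw [h3, pow_succ, map_mul]; ring

theorem summable_aux (c : ℕ → ℤ_[p]) :
    Summable fun m => (p : ℤ_[p]) ^ m * c m := by
  apply Summable.of_norm
  have hp1 : (0:ℝ) ≤ (p : ℝ)⁻¹ := by positivity
  have hp2 : (p : ℝ)⁻¹ < 1 := by
    rw [inv_lt_one_iff₀]
    right
    exact_mod_cast hp.out.one_lt
  refine Summable.of_nonneg_of_le (fun m => norm_nonneg _) (fun m => ?_)
    (summable_geometric_of_lt_one hp1 hp2)
  calc ‖(p : ℤ_[p]) ^ m * c m‖ = ‖(p : ℤ_[p]) ^ m‖ * ‖c m‖ := norm_mul _ _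
    _ ≤ ‖(p : ℤ_[p]) ^ m‖ * 1 := by
        have := PadicInt.norm_le_one (c m)
        have h0 := norm_nonneg ((p : ℤ_[p]) ^ m)
        nlinarith
    _ = ((p:ℝ)⁻¹) ^ m := by
        rw [mul_one, PadicInt.norm_p_pow, zpow_neg, zpow_natCast, inv_pow]

noncomputable def xlim (g : PowerSeries ℤ_[p]) : Fin p → PowerSeries ℤ_[p] :=
  fun i => mk fun d => ∑' m, (p : ℤ_[p]) ^ m * coeff d (Lmap p (gseq p g m) i)

theorem tail_dvd (g : PowerSeries ℤ_[p]) (m : ℕ) (i : Fin p) :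
    C ((p : ℤ_[p]) ^ m) ∣
      (xlim p g i - ∑ k ∈ range m, C ((p : ℤ_[p]) ^ k) * Lmap p (gseq p g k) i) := by
  rw [C_dvd_iff]
  intro d
  rw [map_sub]
  have hcs : coeff d (∑ k ∈ range m, C ((p : ℤ_[p]) ^ k) * Lmap p (gseq p g k) i)
      = ∑ k ∈ range m, (p : ℤ_[p]) ^ k * coeff d (Lmap p (gseq p g k) i) := by
    rw [map_sum]
    exact Finset.sum_congr rfl fun k _ => coeff_C_mul _ _ _
  rw [hcs]
  have hxl : coeff d (xlim p g i)
      = ∑' k, (p : ℤ_[p]) ^ k * coeff d (Lmap p (gseq p g k) i) := coeff_mk _ _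
  rw [hxl]
  have hsummable := summable_aux p (fun k => coeff d (Lmap p (gseq p g k) i))
  rw [← Summable.sum_add_tsum_nat_add m hsummable]
  have h1 : (∑' k, (p : ℤ_[p]) ^ (k + m) * coeff d (Lmap p (gseq p g (k + m)) i))
      = (p : ℤ_[p]) ^ m * ∑' k, (p : ℤ_[p]) ^ k * coeff d (Lmap p (gseq p g (k + m)) i) := by
    rw [← Summable.tsum_mul_left _ (summable_aux p _)]
    congr 1
    funext k
    rw [pow_add]
    ring
  rw [add_sub_cancel_left, h1]
  exact Dvd.intro _ rfl

theorem eq_zero_of_forall_pow_dvd (z : ℤ_[p]) (h : ∀ m, (p : ℤ_[p]) ^ m ∣ z) : z = 0 := by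
  by_contra hz
  have h1 : 0 < ‖z‖ := by
    rw [norm_pos_iff]
    exact hz
  have hp2 : (p : ℝ)⁻¹ < 1 := by
    rw [inv_lt_one_iff₀]
    right
    exact_mod_cast hp.out.one_lt
  obtain ⟨m, hm⟩ := exists_pow_lt_of_lt_one h1 hp2
  obtain ⟨w, hw⟩ := h m
  have : ‖z‖ ≤ ((p:ℝ)⁻¹) ^ m := by
    rw [hw, norm_mul, PadicInt.norm_p_pow, zpow_neg, zpow_natCast, inv_pow]
    have := PadicInt.norm_le_one w
    have h0 : (0:ℝ) ≤ ((p:ℝ) ^ m)⁻¹ := by positivity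
    nlinarith
  linarith

theorem Phi_surj (g : PowerSeries ℤ_[p]) : Phi p (xlim p g) = g := by
  have key : ∀ m : ℕ, C ((p : ℤ_[p]) ^ m) ∣ g - Phi p (xlim p g) := by
    intro m
    have t1 : C ((p : ℤ_[p]) ^ m) ∣ g - Phi p
        (fun i => ∑ k ∈ range m, C ((p : ℤ_[p]) ^ k) * Lmap p (gseq p g k) i) :=
      ⟨gseq p g m, telescope p g m⟩
    have t2 : C ((p : ℤ_[p]) ^ m) ∣ Phi p
        (fun i => ∑ k ∈ range m, C ((p : ℤ_[p]) ^ k) * Lmap p (gseq p g k) i)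
        - Phi p (xlim p g) := by
      rw [← Phi_sub]
      refine C_dvd_Phi p fun i => ?_
      have := tail_dvd p g m i
      rw [← dvd_neg] at this
      simpa [neg_sub] using this
    have := dvd_add t1 t2
    simpa using this
  have hz : g - Phi p (xlim p g) = 0 := by
    ext d
    rw [map_zero]
    apply eq_zero_of_forall_pow_dvd p
    intro m
    exact C_dvd_iff.mp (key m) d
  exact (sub_eq_zero.mp hz).symm

theorem Lmap_C_mul (c : ℤ_[p]) (g : PowerSeries ℤ_[p]) (i : Fin p) :
    Lmap p (C c * g) i = C c * Lmap p g i := by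
  ext k
  simp only [coeff_Lmap, coeff_C_mul, Finset.mul_sum]
  exact Finset.sum_congr rfl fun r _ => by ring

theorem key_dvd (y : Fin p → PowerSeries ℤ_[p]) (hy : Phi p y = 0) (i : Fin p) :
    C (p : ℤ_[p]) ∣ y i := by
  have h : C (p : ℤ_[p]) ∣ Rho p y := by
    have h2 := Phi_sub_Rho p y
    rw [hy, zero_sub, dvd_neg] at h2
    exact h2
  obtain ⟨h', hh⟩ := h
  have h2 : y i = Lmap p (Rho p y) i := (congrFun (L_rho p y) i).symm
  rw [h2, hh, Lmap_C_mul]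
  exact Dvd.intro _ rfl

theorem C_pow_ne_zero (m : ℕ) : C ((p : ℤ_[p]) ^ m) ≠ 0 := by
  intro h
  have h2 := congrArg constantCoeff h
  simp only [constantCoeff_C, map_zero] at h2
  exact pow_ne_zero m (Nat.cast_ne_zero.mpr hp.out.ne_zero) h2

theorem pow_dvd_of_Phi_zero (y : Fin p → PowerSeries ℤ_[p]) (hy : Phi p y = 0) (m : ℕ) :
    ∀ i, C ((p : ℤ_[p]) ^ m) ∣ y i := by
  induction m with
  | zero => intro i; simp
  | succ m ih =>
    choose w hw using ih
    have hy' : y = fun i => C ((p : ℤ_[p]) ^ m) * w i := funext hw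
    have hPw : Phi p w = 0 := by
      rw [hy', Phi_C_mul] at hy
      exact (mul_eq_zero.mp hy).resolve_left (C_pow_ne_zero p m)
    intro i
    obtain ⟨v, hv⟩ := key_dvd p w hPw i
    refine ⟨v, ?_⟩
    rw [hw i, hv, pow_succ, map_mul, mul_assoc]

theorem Phi_inj {x y : Fin p → PowerSeries ℤ_[p]} (h : Phi p x = Phi p y) : x = y := by
  have h0 : Phi p (fun i => x i - y i) = 0 := by
    rw [Phi_sub, h, sub_self]
  funext i
  rw [← sub_eq_zero]
  ext d
  rw [map_zero]
  apply eq_zero_of_forall_pow_dvd p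
  intro m
  exact C_dvd_iff.mp (pow_dvd_of_Phi_zero p _ h0 m i) d

variable (p : ℕ) [hp : Fact p.Prime]

noncomputable def gen (n j : ℕ) : PowerSeries ℤ_[p] :=
  X ^ j * (p : PowerSeries ℤ_[p]) ^ ((((n : ℤ) - 1 - j * p) / ((p : ℤ) - 1)).toNat)

noncomputable def Idl (n : ℕ) : Ideal (PowerSeries ℤ_[p]) :=
  Ideal.span ((fun j : ℕ => X ^ j *
      (p : PowerSeries ℤ_[p]) ^ ((((n : ℤ) - 1 - j * p) / ((p : ℤ) - 1)).toNat)) ''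
    (Set.Iic (n / p)))

theorem gen_mem (n j : ℕ) (hj : j ≤ n / p) : gen p n j ∈ Idl p n :=
  Ideal.subset_span ⟨j, hj, rfl⟩

theorem hplt : (1 : ℤ) < (p : ℤ) := by exact_mod_cast hp.out.one_lt

theorem ee_base (n : ℕ) (hn : n < p) :
    (((n : ℤ) - 1 - ((0:ℕ):ℤ) * p) / ((p : ℤ) - 1)).toNat = 0 := by
  have h1 := hplt p
  rcases Nat.eq_zero_or_pos n with rfl | hn0
  · rw [Int.toNat_eq_zero]
    have : ((0 : ℕ) : ℤ) - 1 - ((0:ℕ):ℤ) * p = -1 := by push_cast; ring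
    rw [this]
    calc (-1 : ℤ) / ((p : ℤ) - 1) ≤ 0 / ((p : ℤ) - 1) :=
          Int.ediv_le_ediv (by omega) (by omega)
      _ = 0 := Int.zero_ediv _
  · have h2 : (n : ℤ) - 1 - ((0:ℕ):ℤ) * p = (n : ℤ) - 1 := by push_cast; ring
    rw [h2, Int.ediv_eq_zero_of_lt (by omega) (by exact_mod_cast (by omega : (n:ℤ) - 1 < (p:ℤ) - 1))]
    rfl

theorem one_mem_Idl (n : ℕ) (hn : n < p) : (1 : PowerSeries ℤ_[p]) ∈ Idl p n := by
  have h := gen_mem p n 0 (Nat.zero_le _)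
  rw [gen, ee_base p n hn] at h
  simpa using h

theorem ee_shift (m j : ℕ) :
    ((((m + p : ℕ) : ℤ) - 1 - (j + 1 : ℕ) * p) / ((p : ℤ) - 1)).toNat
      = (((m : ℤ) - 1 - j * p) / ((p : ℤ) - 1)).toNat := by
  congr 2
  push_cast
  ring

theorem ee_step (m j : ℕ) :
    ((((m + p : ℕ) : ℤ) - 1 - j * p) / ((p : ℤ) - 1)).toNat
      ≤ ((((m + 1 : ℕ) : ℤ) - 1 - j * p) / ((p : ℤ) - 1)).toNat + 1 := by
  have h1 := hplt p
  have key : ((m + p : ℕ) : ℤ) - 1 - j * p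
      = (((m + 1 : ℕ) : ℤ) - 1 - j * p) + 1 * ((p : ℤ) - 1) := by push_cast; ring
  rw [key, Int.add_mul_ediv_right _ 1 (by omega : ((p:ℤ) - 1) ≠ 0)]
  omega

theorem mul_mem_span {S T : Set (PowerSeries ℤ_[p])} (a : PowerSeries ℤ_[p])
    (h : ∀ s ∈ S, a * s ∈ Ideal.span T) {x : PowerSeries ℤ_[p]}
    (hx : x ∈ Ideal.span S) : a * x ∈ Ideal.span T := by
  refine Submodule.span_induction (fun s hs => h s hs) (by simp) ?_ ?_ hx
  · intro y z _ _ hy hz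
    rw [mul_add]
    exact Ideal.add_mem _ hy hz
  · intro r y _ hy
    rw [smul_eq_mul, mul_left_comm]
    exact Ideal.mul_mem_left _ r hy

theorem X_mul_mem (m : ℕ) {x : PowerSeries ℤ_[p]} (hx : x ∈ Idl p m) :
    X * x ∈ Idl p (m + p) := by
  refine mul_mem_span p X ?_ hx
  rintro s ⟨j, hj, rfl⟩
  have h1 : (X : PowerSeries ℤ_[p]) * (X ^ j * (p : PowerSeries ℤ_[p]) ^
        ((((m : ℤ) - 1 - j * p) / ((p : ℤ) - 1)).toNat))
      = gen p (m + p) (j + 1) := by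
    rw [gen, ee_shift p m j, pow_succ]
    ring
  rw [h1]
  apply gen_mem
  rw [Nat.add_div_right m hp.out.pos]
  exact Nat.succ_le_succ hj

theorem p_mul_mem (m : ℕ) {x : PowerSeries ℤ_[p]} (hx : x ∈ Idl p (m + 1)) :
    (p : PowerSeries ℤ_[p]) * x ∈ Idl p (m + p) := by
  refine mul_mem_span p _ ?_ hx
  rintro s ⟨j, hj, rfl⟩
  set e1 := ((((m + 1 : ℕ) : ℤ) - 1 - j * p) / ((p : ℤ) - 1)).toNat with he1
  set e2 := ((((m + p : ℕ) : ℤ) - 1 - j * p) / ((p : ℤ) - 1)).toNat with he2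
  have hle : e2 ≤ e1 + 1 := ee_step p m j
  have h1 : (p : PowerSeries ℤ_[p]) * (X ^ j * (p : PowerSeries ℤ_[p]) ^ e1)
      = (p : PowerSeries ℤ_[p]) ^ (e1 + 1 - e2) * gen p (m + p) j := by
    rw [gen]
    rw [show (p : PowerSeries ℤ_[p]) ^ (e1 + 1 - e2) * (X ^ j * (p : PowerSeries ℤ_[p]) ^ e2)
      = X ^ j * (p : PowerSeries ℤ_[p]) ^ (e1 + 1 - e2 + e2) by rw [pow_add]; ring]
    rw [Nat.sub_add_cancel hle, pow_succ]
    ring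
  rw [h1]
  apply Ideal.mul_mem_left
  apply gen_mem
  have hj2 : j ≤ (m + 1) / p := hj
  calc j ≤ (m + 1) / p := hj2
    _ ≤ (m + p) / p := Nat.div_le_div_right (by have := hp.out.pos; omega)


theorem estimate (n : ℕ) : ∀ f : PowerSeries ℤ_[p],
    ∃ x : Fin p → PowerSeries ℤ_[p], Phi p x = X ^ n * f ∧ x 0 ∈ Idl p n := by
  induction n using Nat.strong_induction_on with
  | _ n ih =>
    intro f
    rcases lt_or_ge n p with hn | hn
    · refine ⟨xlim p (X ^ n * f), Phi_surj p _, ?_⟩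
      have h1 := one_mem_Idl p n hn
      simpa using Ideal.mul_mem_left _ (xlim p (X ^ n * f) 0) h1
    · obtain ⟨m, rfl⟩ : ∃ m, n = m + p := ⟨n - p, by omega⟩
      obtain ⟨u, hu⟩ := exists_u p
      obtain ⟨y, hy, hy0⟩ := ih m (by have := hp.out.one_lt; omega) f
      obtain ⟨z, hz, hz0⟩ := ih (m + 1) (by have := hp.out.one_lt; omega) (u * f)
      refine ⟨fun i => X * y i - C (p : ℤ_[p]) * z i, ?_, ?_⟩
      · have h1 : Phi p (fun i => X * y i - C (p : ℤ_[p]) * z i)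
            = qq p * Phi p y - C (p : ℤ_[p]) * Phi p z := by
          rw [Phi, Phi, Phi, Finset.mul_sum, Finset.mul_sum, ← Finset.sum_sub_distrib]
          refine Finset.sum_congr rfl fun i _ => ?_
          rw [subst'_sub, subst'_X_mul (constantCoeff_qq p), subst'_C_mul]
          ring
        rw [h1, hy, hz, hu, pow_add]
        ring
      · have h2 := X_mul_mem p m hy0
        have h3 := p_mul_mem p m hz0
        have h4 : C (p : ℤ_[p]) * z 0 = (p : PowerSeries ℤ_[p]) * z 0 := by
          rw [map_natCast]
        exact Ideal.sub_mem _ h2 (by rw [h4]; exact h3)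

end SE

/-- **Sharp Estimate I** (Theorem 3.4): if `X^n f = ∑_{i<p} (1+X)^i xᵢ((1+X)^p - 1)`
in `ℤ_p[[X]]`, then `x₀ = ψ(X^n f)` lies in the ideal generated by the elements
`X^j p^[(n-1-jp)/(p-1)]` for `0 ≤ j ≤ [n/p]`. -/
theorem sharp_estimate_I (p : ℕ) [hp : Fact p.Prime] (n : ℕ) (f : PowerSeries ℤ_[p])
    (x : Fin p → PowerSeries ℤ_[p])
    (hx : X ^ n * f =
      ∑ i : Fin p, (1 + X) ^ (i : ℕ) * PowerSeries.subst' ((1 + X) ^ p - 1) (x i)) :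
    x 0 ∈ Ideal.span ((fun j : ℕ => X ^ j *
        (p : PowerSeries ℤ_[p]) ^ ((((n : ℤ) - 1 - j * p) / ((p : ℤ) - 1)).toNat)) ''
      (Set.Iic (n / p))) := by
  have hPhi : SE.Phi p x = X ^ n * f := hx.symm
  obtain ⟨x', hx', hx'0⟩ := SE.estimate p n f
  have hxx : x = x' := SE.Phi_inj p (hPhi.trans hx'.symm)
  rw [hxx]
  exact hx'0
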